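/- arXiv:1711.07554 — 5 statements merged into one kernel-verified Lean document; each statement's English description precedes it below -/
import Mathlib

section
/- Let F be a field of characteristic zero and let q, j, m, n be elements of F with q ≠ 0, m³ = j and n² = (j − 1728)/(−q). Then the Weierstrass curve over F defined by the equation y² = x³ + (m·q/(2⁴·3))·x − (n·q²/(2⁵·3³)) has discriminant equal to −q³ (in particular the discriminant is nonzero, so the equation defines an elliptic curve) and j-invariant equal to j. -/
/-- Let `F` be a field of characteristic zero and `q, j, m, n ∈ F` with
`q ≠ 0`, `m³ = j` and `n² = (j − 1728)/(−q)`. Then the Weierstrass curve over `F` given by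
`y² = x³ + (m·q/(2⁴·3))·x − (n·q²/(2⁵·3³))` has discriminant `−q³` (in particular nonzero)
and `j`-invariant `c₄³/Δ = j`. -/
theorem gross_curve_model_discriminant_and_j
    {F : Type*} [Field F] [CharZero F] (q j m n : F) (hq : q ≠ 0)
    (hm : m ^ 3 = j) (hn : n ^ 2 = (j - 1728) / (-q)) :
    letI W : WeierstrassCurve F :=
      ⟨0, 0, 0, m * q / (2 ^ 4 * 3), -(n * q ^ 2 / (2 ^ 5 * 3 ^ 3))⟩
    W.Δ = -q ^ 3 ∧ W.Δ ≠ 0 ∧ W.c₄ ^ 3 / W.Δ = j := by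
  have hq4 : n ^ 2 * q = 1728 - j := by
    rw [hn, div_neg, neg_mul, div_mul_cancel₀ _ hq]; ring
  have hΔ : (⟨0, 0, 0, m * q / (2 ^ 4 * 3), -(n * q ^ 2 / (2 ^ 5 * 3 ^ 3))⟩ :
      WeierstrassCurve F).Δ = -q ^ 3 := by
    simp only [WeierstrassCurve.Δ, WeierstrassCurve.b₂, WeierstrassCurve.b₄,
      WeierstrassCurve.b₆, WeierstrassCurve.b₈]
    field_simp
    linear_combination (-432 * q ^ 3) * hm + (-432 * q ^ 3) * hq4
  refine ⟨hΔ, ?_, ?_⟩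
  · rw [hΔ]; simpa using pow_ne_zero 3 hq
  · rw [hΔ]
    simp only [WeierstrassCurve.c₄, WeierstrassCurve.b₂, WeierstrassCurve.b₄]
    field_simp
    linear_combination (13824 * q ^ 3) * hm
end

section
/- Let p be an odd prime and ℓ ≥ 1 an integer. Let F be a field of characteristic zero, let ζ be a primitive p^ℓ-th root of unity in an algebraic closure of F, and assume that the degree [F(ζ):F] equals p^(ℓ−1)·(p−1). If x ∈ Fˣ is a p^ℓ-th power in the field F(ζ), then x is already a p^ℓ-th power in F. Equivalently, the natural map Fˣ/(Fˣ)^(p^ℓ) → F(ζ)ˣ/(F(ζ)ˣ)^(p^ℓ) induced by the inclusion F ⊆ F(ζ) is injective. -/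
open IntermediateField

/-- Let `p` be an odd prime, `ℓ ≥ 1`, `F` a field of characteristic zero,
`ζ` a primitive `p^ℓ`-th root of unity in an algebraic closure of `F`, and suppose
`[F(ζ) : F] = p^(ℓ−1)·(p−1)`. If a nonzero `x ∈ F` is a `p^ℓ`-th power in `F(ζ)`,
then `x` is a `p^ℓ`-th power in `F`. -/
theorem kummer_restriction_injective_odd
    (p : ℕ) (hp : p.Prime) (hodd : Odd p) (ℓ : ℕ) (hℓ : 1 ≤ ℓ)
    (F : Type*) [Field F] [CharZero F]
    (ζ : AlgebraicClosure F) (hζ : IsPrimitiveRoot ζ (p ^ ℓ))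
    (hdeg : Module.finrank F F⟮ζ⟯ = p ^ (ℓ - 1) * (p - 1))
    (x : F) (hx : x ≠ 0)
    (h : ∃ y : F⟮ζ⟯, y ^ (p ^ ℓ) = algebraMap F F⟮ζ⟯ x) :
    ∃ z : F, z ^ (p ^ ℓ) = x := by
  obtain ⟨y, hy⟩ := h
  have hn0 : 0 < p ^ ℓ := pow_pos hp.pos ℓ
  set n : ℕ := p ^ ℓ with hn
  haveI : NeZero n := ⟨hn0.ne'⟩
  set ζ' : F⟮ζ⟯ := AdjoinSimple.gen F ζ with hζ'def
  have hζ' : IsPrimitiveRoot ζ' n :=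
    IsPrimitiveRoot.of_map_of_injective
      (by rw [AdjoinSimple.algebraMap_gen F ζ]; exact hζ)
      (algebraMap F⟮ζ⟯ (AlgebraicClosure F)).injective
  -- cyclotomic extension structure
  have hζN : IsPrimitiveRoot ζ ((⟨n, hn0⟩ : ℕ+) : ℕ) := hζ
  have hint : IsIntegral F ζ := (Algebra.IsAlgebraic.isAlgebraic ζ).isIntegral
  have heq : F⟮ζ⟯.toSubalgebra = Algebra.adjoin F {ζ} :=
    adjoin_simple_toSubalgebra_of_isAlgebraic hint.isAlgebraic
  haveI : IsCyclotomicExtension {n} F F⟮ζ⟯ := by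
    haveI := hζ.adjoin_isCyclotomicExtension F
    exact IsCyclotomicExtension.equiv _ F _ (Subalgebra.equivOfEq _ _ heq.symm)
  haveI : FiniteDimensional F F⟮ζ⟯ :=
    IsCyclotomicExtension.finiteDimensional {n} F F⟮ζ⟯
  haveI : IsGalois F F⟮ζ⟯ := IsCyclotomicExtension.isGalois (S := {n}) (K := F) (L := F⟮ζ⟯)
  -- cardinality: autToPow is bijective
  have hinj : Function.Injective (hζ'.autToPow F) := by
    have := hζ'.autToPow_injective (K := F) (n := n)
    exact this
  have hcardG : Fintype.card (F⟮ζ⟯ ≃ₐ[F] F⟮ζ⟯) = Fintype.card (ZMod n)ˣ := by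
    rw [← Nat.card_eq_fintype_card, IsGalois.card_aut_eq_finrank, hdeg, ZMod.card_units_eq_totient, hn,
      Nat.totient_prime_pow hp hℓ]
  have hbij : Function.Bijective (hζ'.autToPow F) :=
    (Fintype.bijective_iff_injective_and_card _).mpr ⟨hinj, hcardG⟩
  obtain ⟨τ₀, hτ₀⟩ := hbij.2 (-1)
  have hy0 : y ≠ 0 := by
    intro h0
    apply hx
    rw [h0, zero_pow hn0.ne'] at hy
    exact (algebraMap F F⟮ζ⟯).injective (by rw [← hy, map_zero])
  have hz0 : ζ' ≠ 0 := hζ'.ne_zero hn0.ne'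
  -- every automorphism multiplies y by a root of unity
  have key : ∀ τ : F⟮ζ⟯ ≃ₐ[F] F⟮ζ⟯, ∃ a : ZMod n, τ y = ζ' ^ a.val * y := by
    intro τ
    have h1 : (τ y / y) ^ n = 1 := by
      rw [div_pow, ← map_pow, hy, AlgEquiv.commutes]
      exact div_self (fun h0 => hx ((algebraMap F F⟮ζ⟯).injective (by rw [h0, map_zero])))
    obtain ⟨i, hi, hpow⟩ := hζ'.eq_pow_of_pow_eq_one h1
    refine ⟨(i : ZMod n), ?_⟩
    rw [ZMod.val_cast_of_lt hi, hpow, div_mul_cancel₀ _ hy0]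
  have spec : ∀ τ : F⟮ζ⟯ ≃ₐ[F] F⟮ζ⟯,
      ζ' ^ ((hζ'.autToPow F τ : ZMod n)).val = τ ζ' := fun τ => hζ'.autToPow_spec F τ
  have hpowiff : ∀ i j : ℕ, ζ' ^ i = ζ' ^ j ↔ (i : ZMod n) = (j : ZMod n) := by
    intro i j
    constructor
    · intro hij
      have h1 : ζ' ^ ((i : ℤ) - j) = 1 := by
        rw [zpow_sub₀ hz0, zpow_natCast, zpow_natCast, hij, div_self (pow_ne_zero _ hz0)]
      have h2 := (ZMod.intCast_zmod_eq_zero_iff_dvd _ n).mpr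
        ((hζ'.zpow_eq_one_iff_dvd _).mp h1)
      rwa [Int.cast_sub, Int.cast_natCast, Int.cast_natCast, sub_eq_zero] at h2
    · intro hij
      have hdvd : (n : ℤ) ∣ (i : ℤ) - j := by
        rwa [← ZMod.intCast_zmod_eq_zero_iff_dvd, Int.cast_sub, Int.cast_natCast,
          Int.cast_natCast, sub_eq_zero]
      have h1 : ζ' ^ ((i : ℤ) - j) = 1 := (hζ'.zpow_eq_one_iff_dvd _).mpr hdvd
      rwa [zpow_sub₀ hz0, zpow_natCast, zpow_natCast,
        div_eq_one_iff_eq (pow_ne_zero _ hz0)] at h1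
  obtain ⟨a₀, ha₀⟩ := key τ₀
  have ht₀ : ((hζ'.autToPow F τ₀ : (ZMod n)ˣ) : ZMod n) = -1 := by
    rw [hτ₀, Units.val_neg, Units.val_one]
  have h2u : IsUnit (-2 : ZMod n) := by
    have h2 : IsUnit ((2 : ℕ) : ZMod n) := by
      rw [ZMod.isUnit_iff_coprime]
      exact Nat.Coprime.pow_right _
        ((Nat.coprime_primes Nat.prime_two hp).mpr
          (fun h12 => (by decide : ¬ Odd 2) (h12 ▸ hodd)))
    simpa using h2.neg
  obtain ⟨u2, hu2⟩ := h2u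
  set b : ZMod n := (↑u2⁻¹ : ZMod n) * a₀ with hb
  have main : ∀ τ : F⟮ζ⟯ ≃ₐ[F] F⟮ζ⟯, ∀ a : ZMod n, τ y = ζ' ^ a.val * y →
      a = (((hζ'.autToPow F τ : (ZMod n)ˣ) : ZMod n) - 1) * b := by
    intro τ a ha
    set t : ZMod n := ((hζ'.autToPow F τ : (ZMod n)ˣ) : ZMod n) with htdef
    set t₀ : ZMod n := ((hζ'.autToPow F τ₀ : (ZMod n)ˣ) : ZMod n) with ht₀def
    have hcommeq : τ (τ₀ y) = τ₀ (τ y) := by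
      have hc : τ * τ₀ = τ₀ * τ := hinj (by rw [map_mul, map_mul, mul_comm])
      have := congrArg (fun σ : F⟮ζ⟯ ≃ₐ[F] F⟮ζ⟯ => σ y) hc
      simpa [AlgEquiv.mul_apply] using this
    rw [ha₀, ha, map_mul, map_mul, map_pow, map_pow, ← spec τ, ← spec τ₀, ha, ha₀]
      at hcommeq
    have hpows : ζ' ^ (t.val * a₀.val + a.val) = ζ' ^ (t₀.val * a.val + a₀.val) :=
      mul_right_cancel₀ hy0 (by
        rw [pow_add, pow_add, pow_mul, pow_mul, mul_assoc, mul_assoc]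
        exact hcommeq)
    have hzz : t * a₀ + a = t₀ * a + a₀ := by
      have h3 := (hpowiff _ _).mp hpows
      push_cast [ZMod.natCast_val, ZMod.cast_id] at h3
      exact h3
    have hfin : (-2 : ZMod n) * a = (t - 1) * a₀ := by
      rw [ht₀] at hzz
      linear_combination -hzz
    calc a = (↑u2⁻¹ : ZMod n) * (↑u2 * a) := by
            rw [← mul_assoc, ← Units.val_mul, inv_mul_cancel, Units.val_one, one_mul]
      _ = (↑u2⁻¹ : ZMod n) * ((t - 1) * a₀) := by rw [hu2, hfin]
      _ = (t - 1) * b := by rw [hb]; ring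
  set w : F⟮ζ⟯ := (ζ' ^ b.val)⁻¹ * y with hw
  have hfix : ∀ τ : F⟮ζ⟯ ≃ₐ[F] F⟮ζ⟯, τ w = w := by
    intro τ
    obtain ⟨a, ha⟩ := key τ
    have hab := main τ a ha
    set t : ZMod n := ((hζ'.autToPow F τ : (ZMod n)ˣ) : ZMod n) with htdef
    have hexp : ζ' ^ (a.val + b.val) = ζ' ^ (t.val * b.val) := by
      rw [hpowiff]
      push_cast [ZMod.natCast_val, ZMod.cast_id]
      rw [hab]; ring
    have hτw : τ w = (ζ' ^ (t.val * b.val))⁻¹ * (ζ' ^ a.val * y) := by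
      rw [hw, map_mul, map_inv₀, map_pow, ← spec τ, ← pow_mul, ha]
    rw [hτw, ← hexp, pow_add, hw]
    field_simp
  have hbot : IntermediateField.fixedField (⊤ : Subgroup (F⟮ζ⟯ ≃ₐ[F] F⟮ζ⟯))
      = ⊥ := OrderIso.map_bot (IsGalois.intermediateFieldEquivSubgroup (F := F) (E := ↥F⟮ζ⟯)).symm
  have hwbot : w ∈ (⊥ : IntermediateField F F⟮ζ⟯) := by
    rw [← hbot]
    exact fun g => hfix g
  obtain ⟨z, hz⟩ := IntermediateField.mem_bot.mp hwbot
  refine ⟨z, (algebraMap F F⟮ζ⟯).injective ?_⟩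
  rw [map_pow, hz, hw, mul_pow, inv_pow, ← pow_mul, mul_comm b.val n, pow_mul,
    hζ'.pow_eq_one, one_pow, inv_one, one_mul, hy]
end

section
/- Let ℓ ≥ 2 be an integer. Let F be a field of characteristic zero, let ζ be a primitive 2^(ℓ+1)-th root of unity in an algebraic closure of F, and assume that the degree [F(ζ):F] equals 2^ℓ. If x ∈ Fˣ is a 2^ℓ-th power in the field F(ζ), then x⁴ is a 2^ℓ-th power in F. Equivalently, the kernel of the natural map Fˣ/(Fˣ)^(2^ℓ) → F(ζ)ˣ/(F(ζ)ˣ)^(2^ℓ) is killed by 4. -/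
open IntermediateField

/-- Let `ℓ ≥ 2`, `F` a field of characteristic zero, `ζ` a primitive
`2^(ℓ+1)`-th root of unity in an algebraic closure of `F`, and suppose
`[F(ζ) : F] = 2^ℓ`. If a nonzero `x ∈ F` is a `2^ℓ`-th power in `F(ζ)`, then `x⁴` is a
`2^ℓ`-th power in `F` (the kernel of the Kummer restriction map is killed by `4`). -/
theorem kummer_restriction_kernel_killed_by_four
    (ℓ : ℕ) (hℓ : 2 ≤ ℓ)
    (F : Type*) [Field F] [CharZero F]
    (ζ : AlgebraicClosure F) (hζ : IsPrimitiveRoot ζ (2 ^ (ℓ + 1)))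
    (hdeg : Module.finrank F F⟮ζ⟯ = 2 ^ ℓ)
    (x : F) (hx : x ≠ 0)
    (h : ∃ y : F⟮ζ⟯, y ^ (2 ^ ℓ) = algebraMap F F⟮ζ⟯ x) :
    ∃ z : F, z ^ (2 ^ ℓ) = x ^ 4 := by
  have hNpos : 0 < 2 ^ (ℓ + 1) := by positivity
  set n' : ℕ+ := ⟨2 ^ (ℓ + 1), hNpos⟩ with hn'
  have hNval : ((n' : ℕ)) = 2 ^ (ℓ + 1) := rfl
  have hζ' : IsPrimitiveRoot ζ (n' : ℕ) := hζ
  have hint : IsIntegral F ζ := (Algebra.IsIntegral.isIntegral ζ)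
  haveI hcyc : IsCyclotomicExtension {(n' : ℕ)} F F⟮ζ⟯ := by
    have H := IntermediateField.adjoin_simple_toSubalgebra_of_isAlgebraic hint.isAlgebraic
    refine IsCyclotomicExtension.equiv _ _ _ (h := ?_) (.refl : F⟮ζ⟯.toSubalgebra ≃ₐ[F] _)
    rw [H]
    exact hζ'.adjoin_isCyclotomicExtension F
  haveI : IsGalois F F⟮ζ⟯ := IsCyclotomicExtension.isGalois {(n' : ℕ)} F F⟮ζ⟯
  haveI : FiniteDimensional F F⟮ζ⟯ := IntermediateField.adjoin.finiteDimensional hint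
  haveI : NeZero ((n' : ℕ)) := ⟨hNpos.ne'⟩
  obtain ⟨y, hy⟩ := h
  have hNsplit : ((n' : ℕ)) = 2 ^ ℓ * 2 := pow_succ 2 ℓ
  -- the primitive root inside K
  set ζK : F⟮ζ⟯ := IntermediateField.AdjoinSimple.gen F ζ with hζKdef
  have hζK : IsPrimitiveRoot ζK (n' : ℕ) := IsPrimitiveRoot.coe_submonoidClass_iff.mp hζ'
  -- the Galois group and the character
  set A := hζK.autToPow F with hA
  have hinj : Function.Injective A := hζK.autToPow_injective F
  have hcard : Fintype.card (F⟮ζ⟯ ≃ₐ[F] F⟮ζ⟯) = Fintype.card (ZMod (n' : ℕ))ˣ := by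
    rw [Fintype.card_eq_nat_card, IsGalois.card_aut_eq_finrank F F⟮ζ⟯, ZMod.card_units_eq_totient, hNval,
      Nat.totient_prime_pow Nat.prime_two (Nat.succ_pos ℓ)]
    simpa using hdeg
  have hbij : Function.Bijective A :=
    (Fintype.bijective_iff_injective_and_card A).2 ⟨hinj, hcard⟩
  -- an automorphism sending ζ to ζ^5
  have hcop : Nat.Coprime 5 (n' : ℕ) := Nat.Coprime.pow_right _ (by decide)
  obtain ⟨σ, hσ⟩ := hbij.surjective (ZMod.unitOfCoprime 5 hcop)
  have hval5 : ((A σ : ZMod (n' : ℕ))).val = 5 := by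
    rw [hσ, ZMod.coe_unitOfCoprime, ZMod.val_natCast_of_lt]
    rw [hNval]
    calc (5 : ℕ) < 2 ^ 3 := by norm_num
    _ ≤ 2 ^ (ℓ + 1) := Nat.pow_le_pow_right (by norm_num) (by omega)
  -- action on N-th roots of unity
  have powaux : ∀ (g : F⟮ζ⟯ ≃ₐ[F] F⟮ζ⟯) (ρ : F⟮ζ⟯), ρ ^ (n' : ℕ) = 1 →
      g ρ = ρ ^ ((A g : ZMod (n' : ℕ))).val := by
    intro g ρ hρ
    obtain ⟨i, -, rfl⟩ := hζK.eq_pow_of_pow_eq_one hρ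
    rw [map_pow, ← hζK.autToPow_spec F g, ← pow_mul, ← pow_mul, mul_comm]
  -- basic nonvanishing
  have hy0 : y ≠ 0 := by
    intro h0
    rw [h0, zero_pow (by positivity)] at hy
    exact hx ((map_eq_zero _).mp hy.symm)
  -- the "cocycle" values are roots of unity
  have hroot : ∀ g : F⟮ζ⟯ ≃ₐ[F] F⟮ζ⟯, (g y / y) ^ (2 ^ ℓ) = 1 := by
    intro g
    have hgy : (g y) ^ (2 ^ ℓ) = y ^ (2 ^ ℓ) := by
      rw [← map_pow, hy]
      rw [AlgEquiv.commutes, ← hy]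
    rw [div_pow, hgy, div_self (pow_ne_zero _ hy0)]
  have hrootN : ∀ g : F⟮ζ⟯ ≃ₐ[F] F⟮ζ⟯, (g y / y) ^ (n' : ℕ) = 1 := by
    intro g
    rw [hNsplit, pow_mul, hroot g, one_pow]
  have hgy0 : ∀ g : F⟮ζ⟯ ≃ₐ[F] F⟮ζ⟯, g y ≠ 0 := by
    intro g hh
    exact hy0 (by simpa using congrArg g.symm hh)
  set a : F⟮ζ⟯ := σ y / y with ha
  have ha0 : a ≠ 0 := div_ne_zero (hgy0 σ) hy0
  have hσy : σ y = a * y := (div_mul_cancel₀ (σ y) hy0).symm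
  -- the commutation relation gives the key identity
  have key : ∀ g : F⟮ζ⟯ ≃ₐ[F] F⟮ζ⟯,
      (g y / y) ^ 4 * a = a ^ ((A g : ZMod (n' : ℕ))).val := by
    intro g
    have hc0 : g y / y ≠ 0 := div_ne_zero (hgy0 g) hy0
    have hgyy : g y = (g y / y) * y := (div_mul_cancel₀ (g y) hy0).symm
    have hcomm : g * σ = σ * g := hinj (by rw [map_mul, map_mul, mul_comm])
    have h1 : g (σ y) = σ (g y) := by
      rw [← AlgEquiv.mul_apply, ← AlgEquiv.mul_apply, hcomm]
    have hga : g a = a ^ ((A g : ZMod (n' : ℕ))).val := powaux g a (hrootN σ)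
    have hσc : σ (g y / y) = (g y / y) ^ 5 := by
      rw [powaux σ _ (hrootN g), hval5]
    have e1 : g (σ y) = a ^ ((A g : ZMod (n' : ℕ))).val * g y := by
      rw [hσy, map_mul, hga]
    have e2 : σ (g y) = (g y / y) ^ 5 * (a * y) := by
      nth_rewrite 1 [hgyy]
      rw [map_mul, hσc, hσy]
    have e3 : a ^ ((A g : ZMod (n' : ℕ))).val * g y = (g y / y) ^ 5 * (a * y) := by
      rw [← e1, h1, e2]
    have e4 : (a ^ ((A g : ZMod (n' : ℕ))).val * (g y / y)) * y
        = ((g y / y) ^ 5 * a) * y := by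
      linear_combination e3 - a ^ ((A g : ZMod (n' : ℕ))).val * hgyy
    have e5 := mul_right_cancel₀ hy0 e4
    apply mul_right_cancel₀ hc0
    linear_combination -e5
  -- the Galois-fixed element
  set z : F⟮ζ⟯ := y ^ 4 / a with hz
  have hfixz : ∀ g : F⟮ζ⟯ ≃ₐ[F] F⟮ζ⟯, g z = z := by
    intro g
    have hga : g a = a ^ ((A g : ZMod (n' : ℕ))).val := powaux g a (hrootN σ)
    have hgyy : g y = (g y / y) * y := (div_mul_cancel₀ (g y) hy0).symm
    rw [hz, map_div₀, map_pow, hga]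
    rw [div_eq_div_iff (pow_ne_zero _ ha0) ha0]
    linear_combination y ^ 4 * key g +
      a * ((g y) ^ 3 + (g y) ^ 2 * ((g y / y) * y) + (g y) * ((g y / y) * y) ^ 2 +
        ((g y / y) * y) ^ 3) * hgyy
  have hfix : IntermediateField.fixedField (⊤ : Subgroup (F⟮ζ⟯ ≃ₐ[F] F⟮ζ⟯)) = ⊥ := by
    exact OrderIso.map_bot (IsGalois.intermediateFieldEquivSubgroup (F := F) (E := ↥(F⟮ζ⟯))).symm
  have hzbot : z ∈ (⊥ : IntermediateField F F⟮ζ⟯) := by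
    rw [← hfix]
    exact fun g => hfixz g
  obtain ⟨z₀, hz₀⟩ := IntermediateField.mem_bot.mp hzbot
  refine ⟨z₀, ?_⟩
  have ham : a ^ (2 ^ ℓ) = 1 := hroot σ
  have hzm : z ^ (2 ^ ℓ) = algebraMap F F⟮ζ⟯ (x ^ 4) := by
    rw [hz, div_pow, ham, div_one, ← pow_mul, mul_comm 4, pow_mul, hy, map_pow]
  apply (algebraMap F F⟮ζ⟯).injective
  rw [map_pow, hz₀]
  exact hzm
end

section
/- Let p be an odd prime, ℓ ≥ 1 an integer, G the unit group (ℤ/p^ℓℤ)ˣ, and M = ℤ/p^ℓℤ, with G acting on M by multiplication. Then every crossed homomorphism f : G → M is principal: if f satisfies f(u·v) = f(u) + u·f(v) for all u, v ∈ G, then there exists x ∈ M such that f(u) = u·x − x for all u ∈ G. In other words, the first group cohomology H¹((ℤ/p^ℓℤ)ˣ, ℤ/p^ℓℤ) for the multiplication action vanishes. -/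
/-- Let `p` be an odd prime and `ℓ ≥ 1`. Every crossed homomorphism
`f : (ℤ/p^ℓℤ)ˣ → ℤ/p^ℓℤ` (for the multiplication action) is principal; i.e.
`H¹((ℤ/p^ℓℤ)ˣ, ℤ/p^ℓℤ) = 0`. -/
theorem h1_units_zmod_odd_prime_vanishes
    (p : ℕ) (hp : p.Prime) (hodd : Odd p) (ℓ : ℕ) (hℓ : 1 ≤ ℓ)
    (f : (ZMod (p ^ ℓ))ˣ → ZMod (p ^ ℓ))
    (hf : ∀ u v : (ZMod (p ^ ℓ))ˣ, f (u * v) = f u + (u : ZMod (p ^ ℓ)) * f v) :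
    ∃ x : ZMod (p ^ ℓ), ∀ u : (ZMod (p ^ ℓ))ˣ, f u = (u : ZMod (p ^ ℓ)) * x - x := by
  -- 2 is a unit mod p^ℓ since p is odd
  have hcop : Nat.Coprime 2 (p ^ ℓ) := by
    exact Nat.Coprime.pow_right _ (Nat.coprime_two_left.mpr hodd)
  have h2 : IsUnit (2 : ZMod (p ^ ℓ)) := by
    have := (ZMod.isUnit_iff_coprime 2 (p ^ ℓ)).mpr hcop
    simpa using this
  refine ⟨f h2.unit, fun u => ?_⟩
  have h1 := hf u h2.unit
  have h2' := hf h2.unit u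
  rw [mul_comm] at h1
  rw [h1, IsUnit.unit_spec] at h2'
  linear_combination -h2'
end

section
/- Let ℓ ≥ 1 be an integer, G the unit group (ℤ/2^(ℓ+1)ℤ)ˣ, and M = ℤ/2^ℓℤ, with G acting on M through reduction modulo 2^ℓ followed by multiplication (u·x = ū·x, where ū is the image of u in ℤ/2^ℓℤ). Then for every crossed homomorphism f : G → M (i.e. f(u·v) = f(u) + u·f(v) for all u, v ∈ G), there exists x ∈ M such that 4·f(u) = u·x − x for all u ∈ G. In other words, the first group cohomology H¹((ℤ/2^(ℓ+1)ℤ)ˣ, ℤ/2^ℓℤ) is killed by 4. -/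
/-- Let `ℓ ≥ 1` and let `G = (ℤ/2^(ℓ+1)ℤ)ˣ` act on `M = ℤ/2^ℓℤ` by
reduction modulo `2^ℓ` followed by multiplication. For every crossed homomorphism
`f : G → M` there exists `x ∈ M` with `4·f(u) = ū·x − x` for all `u`; i.e.
`H¹((ℤ/2^(ℓ+1)ℤ)ˣ, ℤ/2^ℓℤ)` is killed by `4`. -/
theorem h1_units_zmod_two_killed_by_four
    (ℓ : ℕ) (hℓ : 1 ≤ ℓ)
    (f : (ZMod (2 ^ (ℓ + 1)))ˣ → ZMod (2 ^ ℓ))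
    (hf : ∀ u v : (ZMod (2 ^ (ℓ + 1)))ˣ, f (u * v) = f u +
      ZMod.castHom (pow_dvd_pow 2 ℓ.le_succ) (ZMod (2 ^ ℓ)) (u : ZMod (2 ^ (ℓ + 1))) * f v) :
    ∃ x : ZMod (2 ^ ℓ), ∀ u : (ZMod (2 ^ (ℓ + 1)))ˣ,
      4 * f u =
        ZMod.castHom (pow_dvd_pow 2 ℓ.le_succ) (ZMod (2 ^ ℓ)) (u : ZMod (2 ^ (ℓ + 1))) * x - x := by
  have hcop : Nat.Coprime 5 (2 ^ (ℓ + 1)) := Nat.Coprime.pow_right _ (by norm_num)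
  set u5 : (ZMod (2 ^ (ℓ + 1)))ˣ := ZMod.unitOfCoprime 5 hcop with hu5
  refine ⟨f u5, fun u => ?_⟩
  have h1 := hf u u5
  have h2 := hf u5 u
  rw [mul_comm, h1] at h2
  have h5 : ZMod.castHom (pow_dvd_pow 2 ℓ.le_succ) (ZMod (2 ^ ℓ))
      ((u5 : ZMod (2 ^ (ℓ + 1)))) = 5 := by
    rw [hu5, ZMod.coe_unitOfCoprime, map_natCast]
    push_cast; ring
  rw [h5] at h2
  linear_combination -h2
end
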